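/- DLL with BCP p-simulates DLL: if a CNF formula α, all of whose variables lie in a finite set V of size n, has a decision-tree (DLL) refutation of size s, then α has a BCP-compliant decision-tree refutation of size at most s + n·(s + 1) (BCP adds at most n forced decisions per leaf of the original tree). -/

import Mathlib

/-- A variable is a natural number. -/
abbrev Var : Type := ℕ

/-- A literal is a pair of a variable and a Boolean. -/
abbrev Lit : Type := Var × Bool

/-- A clause is a finite set of literals. -/
abbrev Clause : Type := Finset Lit

/-- A CNF formula is a finite set of clauses. -/
abbrev CNF : Type := Finset Clause

/-- A partial assignment. -/
abbrev PAssign : Type := Var → Option Bool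

/-- A clause is falsified by a partial assignment if all its literals are false under it. -/
def Falsified (ρ : PAssign) (C : Clause) : Prop :=
  ∀ l ∈ C, ρ l.1 = some (!l.2)

/-- Extend a partial assignment by `v := b`. -/
def extendP (ρ : PAssign) (v : Var) (b : Bool) : PAssign :=
  fun w => if w = v then some b else ρ w

/-- Binary decision trees: leaves labeled by clauses, internal nodes labeled by a
variable, with `t0` the `v := false` child and `t1` the `v := true` child. -/
inductive DTree : Type where
  | leaf (C : Clause)
  | node (v : Var) (t0 t1 : DTree)

/-- Size of a decision tree: the number of internal nodes (decisions). -/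
def DTree.size : DTree → ℕ
  | .leaf _ => 0
  | .node _ t0 t1 => t0.size + t1.size + 1

/-- Correctness of a decision-tree (DLL) refutation of `α`, relative to the partial
assignment `ρ` accumulated along the path from the root: no variable occurs twice on
a path, and every leaf is labeled by a clause of `α` falsified by its path assignment. -/
def DLLOk (α : CNF) : PAssign → DTree → Prop
  | ρ, .leaf C => C ∈ α ∧ Falsified ρ C
  | ρ, .node v t0 t1 =>
      ρ v = none ∧ DLLOk α (extendP ρ v false) t0 ∧ DLLOk α (extendP ρ v true) t1

/-- A decision-tree (DLL) refutation of `α`. -/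
def IsDLLRefutation (α : CNF) (t : DTree) : Prop :=
  DLLOk α (fun _ => none) t

/-- Resolution trees: leaves labeled by clauses, internal nodes labeled by a clause
and a pivot variable, `t1` being the child whose clause contains `(v, true)` and
`t2` the child whose clause contains `(v, false)`. -/
inductive RTree : Type where
  | leaf (C : Clause)
  | node (C : Clause) (v : Var) (t1 t2 : RTree)

/-- The clause labeling the root of a resolution tree. -/
def RTree.clause : RTree → Clause
  | .leaf C => C
  | .node C _ _ _ => C

/-- Size of a resolution tree: the number of internal nodes. -/
def RTree.size : RTree → ℕ
  | .leaf _ => 0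
  | .node _ _ t1 t2 => t1.size + t2.size + 1

/-- Correctness of a tree-like resolution derivation from `α`: every leaf is a clause
of `α` and every internal node is the resolvent of its two children on its pivot. -/
def ResOk (α : CNF) : RTree → Prop
  | .leaf C => C ∈ α
  | .node C v t1 t2 =>
      ResOk α t1 ∧ ResOk α t2 ∧
      (v, true) ∈ t1.clause ∧ (v, false) ∈ t2.clause ∧
      C = t1.clause.erase (v, true) ∪ t2.clause.erase (v, false)

/-- A tree-like resolution refutation of `α`: a correct derivation of the empty clause. -/
def IsTLRRefutation (α : CNF) (t : RTree) : Prop :=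
  ResOk α t ∧ t.clause = ∅

/-- A total assignment satisfies a CNF formula if every clause contains a true literal. -/
def Satisfies (τ : Var → Bool) (α : CNF) : Prop :=
  ∀ C ∈ α, ∃ l ∈ C, τ l.1 = l.2

/-- A CNF formula is unsatisfiable if no total assignment satisfies it. -/
def Unsat (α : CNF) : Prop :=
  ∀ τ : Var → Bool, ¬ Satisfies τ α

/-- Every root-to-leaf path of the tree assigns every variable of `V`. -/
def AssignsAll (V : Finset Var) : PAssign → DTree → Prop
  | ρ, .leaf _ => ∀ v ∈ V, ρ v ≠ none
  | ρ, .node v t0 t1 =>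
      AssignsAll V (extendP ρ v false) t0 ∧ AssignsAll V (extendP ρ v true) t1

/-- A total-enumeration (TAE) refutation of `α` over `V`: a decision-tree refutation
in which every root-to-leaf path assigns every variable of `V`. -/
def IsTAERefutation (α : CNF) (V : Finset Var) (t : DTree) : Prop :=
  IsDLLRefutation α t ∧ AssignsAll V (fun _ => none) t

/-- `C` is a unit clause under `ρ` with unassigned literal `(v, b)`: exactly one
literal of `C` is unassigned and all other literals of `C` are false under `ρ`. -/
def UnitClause (ρ : PAssign) (C : Clause) (v : Var) (b : Bool) : Prop :=
  (v, b) ∈ C ∧ ρ v = none ∧ ∀ l ∈ C, l ≠ (v, b) → ρ l.1 = some (!l.2)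

/-- BCP-compliance of a decision tree: at every internal node whose path assignment
makes some clause of `α` unit, the node is labeled by the variable `v` of the
unassigned literal `(v, b)` of some unit clause `C` of `α`, and the child along the
edge `v := ¬b` is a leaf labeled by `C`. -/
def BCPOk (α : CNF) : PAssign → DTree → Prop
  | _, .leaf _ => True
  | ρ, .node v t0 t1 =>
      ((∃ C ∈ α, ∃ w b, UnitClause ρ C w b) →
        ∃ C ∈ α, ∃ b, UnitClause ρ C v b ∧
          cond b (t0 = DTree.leaf C) (t1 = DTree.leaf C)) ∧
      BCPOk α (extendP ρ v false) t0 ∧ BCPOk α (extendP ρ v true) t1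

/-- A BCP-compliant decision-tree refutation of `α`. -/
def IsBCPRefutation (α : CNF) (t : DTree) : Prop :=
  IsDLLRefutation α t ∧ BCPOk α (fun _ => none) t

/-- The variables of `α` all lie in `V`. -/
def VarsIn (α : CNF) (V : Finset Var) : Prop :=
  ∀ C ∈ α, ∀ l ∈ C, l.1 ∈ V

/-- The fresh chain variable `lᵢᵖ` for the literal `p = (x, s)` over `a, b, c`
(encoded as variables `0, 1, 2`); injective for `x < 3`, `i ≥ 1`, and disjoint
from `{0, 1, 2}`. -/
def chainVar (x : Var) (s : Bool) (i : ℕ) : Var :=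
  3 + (x + 3 * cond s 1 0) + 6 * i

/-- The eight width-3 clauses over the variables `a = 0`, `b = 1`, `c = 2`:
all possible disjunctions of literals of `a`, `b`, `c`. -/
def signClauses : Finset Clause :=
  (Finset.univ : Finset (Bool × Bool × Bool)).image
    (fun ε => ({(0, ε.1), (1, ε.2.1), (2, ε.2.2)} : Clause))

/-- For each of the six literals `p = (x, s)` over `a, b, c`, the chain clauses
`{p, l₁ᵖ}` and `{¬lᵢᵖ, l₍ᵢ₊₁₎ᵖ}` for `1 ≤ i ≤ k - 1`. -/
def chainClauses (k : ℕ) : Finset Clause :=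
  ((Finset.range 3) ×ˢ (Finset.univ : Finset Bool)).biUnion fun q =>
    insert ({(q.1, q.2), (chainVar q.1 q.2 1, true)} : Clause)
      ((Finset.Icc 1 (k - 1)).image fun i =>
        ({(chainVar q.1 q.2 i, false), (chainVar q.1 q.2 (i + 1), true)} : Clause))

/-- The formula `F_k` separating DLL from DLL + BCP. -/
def Fk (k : ℕ) : CNF := signClauses ∪ chainClauses k

lemma extendP_eq_self {ρ : PAssign} {v : Var} {b : Bool} (h : ρ v = some b) :
    extendP ρ v b = ρ := by
  funext w
  simp only [extendP]
  split
  · next hw => subst hw; exact h.symm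
  · rfl

lemma extendP_comm {ρ : PAssign} {v w : Var} {b c : Bool} (h : v ≠ w) :
    extendP (extendP ρ w c) v b = extendP (extendP ρ v b) w c := by
  funext x
  simp only [extendP]
  split
  · next hx => subst hx; simp [if_neg h]
  · rfl

lemma extendP_idem {ρ : PAssign} {v : Var} {b : Bool} :
    extendP (extendP ρ v b) v b = extendP ρ v b := by
  funext x; simp only [extendP]; split <;> rfl

/-- Restrict a decision tree by the assignment `v := b`. -/
def DTree.restrict : DTree → Var → Bool → DTree
  | .leaf C, _, _ => .leaf C
  | .node w t0 t1, v, b =>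
      if w = v then (if b then t1.restrict v b else t0.restrict v b)
      else .node w (t0.restrict v b) (t1.restrict v b)

lemma restrict_size (v : Var) (b : Bool) : ∀ t : DTree, (t.restrict v b).size ≤ t.size := by
  intro t
  induction t with
  | leaf C => simp [DTree.restrict, DTree.size]
  | node w t0 t1 ih0 ih1 =>
    simp only [DTree.restrict]
    split
    · split <;> simp [DTree.size] <;> omega
    · simp [DTree.size]; omega

lemma falsified_extend {ρ : PAssign} {C : Clause} {v : Var} {b : Bool}
    (h : Falsified ρ C) (hv : ρ v = none ∨ ρ v = some b) :
    Falsified (extendP ρ v b) C := by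
  intro l hl
  have := h l hl
  simp only [extendP]
  split
  · next hx =>
    rcases hv with hv | hv
    · rw [hx] at this; rw [this] at hv; cases hv
    · rw [hx] at this; rw [this] at hv; exact hv.symm ▸ rfl
  · exact this

lemma restrict_ok (α : CNF) (v : Var) (b : Bool) :
    ∀ (t : DTree) (ρ : PAssign), DLLOk α ρ t → (ρ v = none ∨ ρ v = some b) →
      DLLOk α (extendP ρ v b) (t.restrict v b) := by
  intro t
  induction t with
  | leaf C =>
    intro ρ hok hv
    exact ⟨hok.1, falsified_extend hok.2 hv⟩
  | node w t0 t1 ih0 ih1 =>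
    intro ρ hok hv
    obtain ⟨hw, h0, h1⟩ := hok
    simp only [DTree.restrict]
    split
    · next hwv =>
      subst hwv
      have key : ∀ t' : DTree, DLLOk α (extendP ρ w b) t' →
          DLLOk α (extendP ρ w b) (t'.restrict w b) → True := fun _ _ _ => trivial
      cases b with
      | false =>
        have := ih0 (extendP ρ w false) h0 (Or.inr (by simp [extendP]))
        rwa [extendP_idem] at this
      | true =>
        have := ih1 (extendP ρ w true) h1 (Or.inr (by simp [extendP]))
        rwa [extendP_idem] at this
    · next hwv =>
      refine ⟨?_, ?_, ?_⟩
      · simp only [extendP]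
        rw [if_neg hwv]
        exact hw
      · have := ih0 (extendP ρ w false) h0 (by simp only [extendP]; rw [if_neg (Ne.symm hwv)]; exact hv)
        rwa [extendP_comm (Ne.symm hwv)] at this
      · have := ih1 (extendP ρ w true) h1 (by simp only [extendP]; rw [if_neg (Ne.symm hwv)]; exact hv)
        rwa [extendP_comm (Ne.symm hwv)] at this

lemma filter_extend_subset (V : Finset Var) (ρ : PAssign) (v : Var) (b : Bool) :
    V.filter (fun w => extendP ρ v b w = none) ⊆ V.filter (fun w => ρ w = none) := by
  intro x hx
  simp only [Finset.mem_filter] at hx ⊢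
  refine ⟨hx.1, ?_⟩
  have := hx.2
  simp only [extendP] at this
  split at this
  · cases this
  · exact this

lemma filter_extend_erase (V : Finset Var) (ρ : PAssign) (v : Var) (b : Bool) :
    V.filter (fun w => extendP ρ v b w = none) = (V.filter (fun w => ρ w = none)).erase v := by
  ext x
  simp only [Finset.mem_filter, Finset.mem_erase]
  simp only [extendP]
  constructor
  · rintro ⟨hxV, hx⟩
    split at hx
    · cases hx
    · next h => exact ⟨h, hxV, hx⟩
  · rintro ⟨hxv, hxV, hx⟩
    rw [if_neg hxv]
    exact ⟨hxV, hx⟩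

lemma bcp_main (α : CNF) (V : Finset Var) (hvars : VarsIn α V) :
    ∀ (N : ℕ) (t : DTree) (ρ : PAssign),
      (V.filter (fun w => ρ w = none)).card + t.size < N →
      DLLOk α ρ t →
      ∃ t', DLLOk α ρ t' ∧ BCPOk α ρ t' ∧
        t'.size ≤ t.size + (V.filter (fun w => ρ w = none)).card * (t.size + 1) := by
  intro N
  induction N with
  | zero => intro t ρ hm; omega
  | succ N ih =>
    intro t ρ hm hok
    by_cases hA : ∃ C ∈ α, Falsified ρ C
    · obtain ⟨C, hC, hF⟩ := hA
      exact ⟨.leaf C, ⟨hC, hF⟩, trivial, by simp [DTree.size]⟩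
    · by_cases hB : ∃ C ∈ α, ∃ w b, UnitClause ρ C w b
      · obtain ⟨C, hC, v, b, hu⟩ := hB
        obtain ⟨hvb, hvnone, hrest⟩ := hu
        have hvV : v ∈ V := hvars C hC (v, b) hvb
        have hvmem : v ∈ V.filter (fun w => ρ w = none) := by
          simp [Finset.mem_filter, hvV, hvnone]
        set U := (V.filter (fun w => ρ w = none)).card with hU
        have hU1 : (V.filter (fun w => extendP ρ v b w = none)).card = U - 1 := by
          rw [filter_extend_erase, Finset.card_erase_of_mem hvmem]
        have hUpos : 1 ≤ U := Finset.card_pos.mpr ⟨v, hvmem⟩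
        -- restricted tree
        have hres : DLLOk α (extendP ρ v b) (t.restrict v b) :=
          restrict_ok α v b t ρ hok (Or.inl hvnone)
        have hsz : (t.restrict v b).size ≤ t.size := restrict_size v b t
        obtain ⟨trec, hrec_ok, hrec_bcp, hrec_sz⟩ :=
          ih (t.restrict v b) (extendP ρ v b) (by rw [hU1]; omega) hres
        -- the falsified leaf on the other branch
        have hleaf : Falsified (extendP ρ v (!b)) C := by
          intro l hl
          by_cases hlv : l = (v, b)
          · subst hlv; simp [extendP]
          · have := hrest l hl hlv
            have hlne : l.1 ≠ v := by
              intro h; rw [h, hvnone] at this; cases this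
            simp [extendP, hlne, this]
        have hszbound : ∀ trs : ℕ, trs ≤ (t.restrict v b).size + (U - 1) * ((t.restrict v b).size + 1) →
            trs + 1 ≤ t.size + U * (t.size + 1) := by
          intro trs h
          have h2 : (U - 1) * ((t.restrict v b).size + 1) ≤ (U - 1) * (t.size + 1) :=
            Nat.mul_le_mul_left _ (by omega)
          have h3 : U * (t.size + 1) = (t.size + 1) + (U - 1) * (t.size + 1) := by
            obtain ⟨u, hu⟩ := Nat.exists_eq_add_of_le hUpos
            rw [hu]
            have h4 : 1 + u - 1 = u := by omega
            rw [h4]; ring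
          omega
        rw [hU1] at hrec_sz
        cases b with
        | false =>
          refine ⟨.node v trec (.leaf C), ⟨hvnone, hrec_ok, hC, hleaf⟩, ?_, ?_⟩
          · exact ⟨fun _ => ⟨C, hC, false, ⟨hvb, hvnone, hrest⟩, rfl⟩, hrec_bcp, trivial⟩
          · simpa [DTree.size] using hszbound trec.size hrec_sz
        | true =>
          refine ⟨.node v (.leaf C) trec, ⟨hvnone, ⟨hC, hleaf⟩, hrec_ok⟩, ?_, ?_⟩
          · exact ⟨fun _ => ⟨C, hC, true, ⟨hvb, hvnone, hrest⟩, rfl⟩, trivial, hrec_bcp⟩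
          · simpa [DTree.size] using hszbound trec.size hrec_sz
      · cases t with
        | leaf C => exact absurd ⟨C, hok.1, hok.2⟩ hA
        | node w t0 t1 =>
          obtain ⟨hw, h0, h1⟩ := hok
          set U := (V.filter (fun w => ρ w = none)).card with hU
          have hsub0 := Finset.card_le_card (filter_extend_subset V ρ w false)
          have hsub1 := Finset.card_le_card (filter_extend_subset V ρ w true)
          simp only [DTree.size] at hm
          obtain ⟨t0', h0ok, h0bcp, h0sz⟩ :=
            ih t0 (extendP ρ w false) (by omega) h0
          obtain ⟨t1', h1ok, h1bcp, h1sz⟩ :=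
            ih t1 (extendP ρ w true) (by omega) h1
          refine ⟨.node w t0' t1', ⟨hw, h0ok, h1ok⟩,
            ⟨fun h => absurd h hB, h0bcp, h1bcp⟩, ?_⟩
          simp only [DTree.size]
          have e0 : (V.filter (fun x => extendP ρ w false x = none)).card * (t0.size + 1)
              ≤ U * (t0.size + 1) := Nat.mul_le_mul_right _ hsub0
          have e1 : (V.filter (fun x => extendP ρ w true x = none)).card * (t1.size + 1)
              ≤ U * (t1.size + 1) := Nat.mul_le_mul_right _ hsub1
          have : U * (t0.size + 1) + U * (t1.size + 1) = U * (t0.size + t1.size + 1 + 1) := by ring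
          omega

/-- DLL with BCP p-simulates DLL: if a CNF formula `α`, all of whose
variables lie in a finite set `V` of size `n`, has a DLL refutation of size `s`, then
`α` has a BCP-compliant decision-tree refutation of size at most `s + n * (s + 1)`. -/
theorem bcp_psimulates_dll (α : CNF) (V : Finset Var) (n : ℕ) (hV : V.card = n)
    (hvars : VarsIn α V) (t : DTree) (ht : IsDLLRefutation α t) (s : ℕ)
    (hs : t.size = s) :
    ∃ t' : DTree, IsBCPRefutation α t' ∧ t'.size ≤ s + n * (s + 1) := by
  have hfilter : (V.filter (fun w => (fun _ : Var => (none : Option Bool)) w = none)) = V := by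
    simp
  obtain ⟨t', hok, hbcp, hsz⟩ :=
    bcp_main α V hvars (V.card + t.size + 1) t (fun _ => none)
      (by rw [hfilter]; omega) ht
  refine ⟨t', ⟨hok, hbcp⟩, ?_⟩
  rw [hfilter, hV, hs] at hsz
  exact hsz
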